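/- Let (M,g) be a complete Riemannian manifold with nonnegative sectional curvature and γ : [0,∞) → M a unit-speed geodesic ray. Then the Busemann function B_γ(x) := lim_{t→∞} (t − d(x, γ(t))) is well-defined (the limit exists for every x ∈ M), 1-Lipschitz, and convex along geodesics. -/
import Mathlib

open Filter

/-- The Euclidean comparison angle at `p` of the triple `(p,a,b)`. -/
noncomputable def cmpAngle0 {Y : Type*} (d : Y → Y → ℝ) (p a b : Y) : ℝ :=
  Real.arccos ((d p a ^ 2 + d p b ^ 2 - d a b ^ 2) / (2 * d p a * d p b))

/-- Nonnegative curvature via the (1+3)-point comparison condition. -/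
def QuadCurvGE0 {Y : Type*} (d : Y → Y → ℝ) : Prop :=
  ∀ p a b c : Y, d p a ≠ 0 → d p b ≠ 0 → d p c ≠ 0 →
    cmpAngle0 d p a b + cmpAngle0 d p b c + cmpAngle0 d p c a ≤ 2 * Real.pi

lemma quad_comp {M : Type*} [MetricSpace M]
    (hcurv : QuadCurvGE0 (fun x y : M => dist x y))
    (x p y q : M) (θ L : ℝ) (hθ0 : 0 < θ) (hθ1 : θ < 1) (hL : 0 < L)
    (hxp : dist x p = θ * L) (hpy : dist p y = (1 - θ) * L) (hxy : dist x y = L) :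
    (1 - θ) * dist x q ^ 2 + θ * dist y q ^ 2 ≤ dist p q ^ 2 + θ * (1 - θ) * L ^ 2 := by
  have hθ1' : (0:ℝ) < 1 - θ := by linarith
  by_cases hr : dist p q = 0
  · have hq : q = p := dist_eq_zero.mp (by rwa [dist_comm] at hr)
    rw [hq, dist_self, dist_comm y p, hxp, hpy]
    nlinarith [sq_nonneg L]
  · have hrpos : 0 < dist p q := lt_of_le_of_ne dist_nonneg (Ne.symm hr)
    have hdu : dist p x = θ * L := by rw [dist_comm]; exact hxp
    have h1 : dist p x ≠ 0 := by rw [hdu]; exact ne_of_gt (by positivity)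
    have h3 : dist p y ≠ 0 := by rw [hpy]; exact ne_of_gt (by positivity)
    have H := hcurv p x q y h1 hr h3
    simp only [cmpAngle0] at H
    have e3 : (dist p y ^ 2 + dist p x ^ 2 - dist y x ^ 2) / (2 * dist p y * dist p x) = -1 := by
      rw [hdu, hpy, dist_comm y x, hxy]
      field_simp
      ring
    rw [e3, Real.arccos_neg_one] at H
    set u : ℝ := (dist p x ^ 2 + dist p q ^ 2 - dist x q ^ 2) / (2 * dist p x * dist p q) with hu
    set v : ℝ := (dist p q ^ 2 + dist p y ^ 2 - dist q y ^ 2) / (2 * dist p q * dist p y) with hv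
    have hαβ : Real.arccos u + Real.arccos v ≤ Real.pi := by linarith
    have hDu : (0:ℝ) < 2 * dist p x * dist p q := by
      have : (0:ℝ) < dist p x := lt_of_le_of_ne dist_nonneg (Ne.symm h1)
      positivity
    have hDv : (0:ℝ) < 2 * dist p q * dist p y := by
      have : (0:ℝ) < dist p y := lt_of_le_of_ne dist_nonneg (Ne.symm h3)
      positivity
    have hu1 : -1 ≤ u := by
      rw [hu, le_div_iff₀ hDu]
      nlinarith [dist_triangle x p q, (dist_nonneg : (0:ℝ) ≤ dist x q),
        (dist_nonneg : (0:ℝ) ≤ dist p x), (dist_nonneg : (0:ℝ) ≤ dist p q), dist_comm x p]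
    have hv1 : -1 ≤ v := by
      rw [hv, le_div_iff₀ hDv]
      nlinarith [dist_triangle q p y, (dist_nonneg : (0:ℝ) ≤ dist q y),
        (dist_nonneg : (0:ℝ) ≤ dist p q), (dist_nonneg : (0:ℝ) ≤ dist p y), dist_comm q p]
    have key : 0 ≤ u + v := by
      have hau : Real.arccos u = Real.arccos (min u 1) := by
        rcases le_total u 1 with h | h
        · rw [min_eq_left h]
        · rw [min_eq_right h, Real.arccos_eq_zero.mpr h, Real.arccos_one]
      have hav : Real.arccos v = Real.arccos (min v 1) := by
        rcases le_total v 1 with h | h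
        · rw [min_eq_left h]
        · rw [min_eq_right h, Real.arccos_eq_zero.mpr h, Real.arccos_one]
      rw [hau, hav] at hαβ
      have h5 : Real.arccos (min u 1) ≤ Real.pi - Real.arccos (min v 1) := by linarith
      have h6 := Real.cos_le_cos_of_nonneg_of_le_pi (Real.arccos_nonneg (min u 1))
        (by linarith [Real.arccos_nonneg (min v 1)]) h5
      rw [Real.cos_pi_sub, Real.cos_arccos (le_min hu1 (by norm_num)) (min_le_right _ _),
        Real.cos_arccos (le_min hv1 (by norm_num)) (min_le_right _ _)] at h6
      have hmu : min u 1 ≤ u := min_le_left _ _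
      have hmv : min v 1 ≤ v := min_le_left _ _
      linarith
    have hfin : 0 ≤ (dist p x ^ 2 + dist p q ^ 2 - dist x q ^ 2) * (2 * dist p q * dist p y)
        + (2 * dist p x * dist p q) * (dist p q ^ 2 + dist p y ^ 2 - dist q y ^ 2) := by
      rw [hu, hv, div_add_div _ _ (ne_of_gt hDu) (ne_of_gt hDv), le_div_iff₀ (by positivity)] at key
      linarith
    rw [hdu, hpy, dist_comm q y] at hfin
    nlinarith [hfin, mul_pos hL hrpos, mul_pos (mul_pos hθ0 hθ1') (mul_pos hL hrpos)]

set_option maxHeartbeats 2000000 in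
theorem stmt13 {M : Type*} [MetricSpace M] [CompleteSpace M]
    (hmid : ∀ x y : M, ∃ m : M, dist x m = dist x y / 2 ∧ dist m y = dist x y / 2)
    (hcurv : QuadCurvGE0 (fun x y : M => dist x y))
    (γ : ℝ → M) (hγ : ∀ s u : ℝ, 0 ≤ s → 0 ≤ u → dist (γ s) (γ u) = |s - u|) :
    ∃ B : M → ℝ,
      (∀ x : M, Tendsto (fun t => t - dist x (γ t)) atTop (nhds (B x))) ∧
      LipschitzWith 1 B ∧
      ∀ (c : ℝ → M) (a b : ℝ),
        (∀ s ∈ Set.Icc a b, ∀ u ∈ Set.Icc a b, dist (c s) (c u) = |s - u|) →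
        ConvexOn ℝ (Set.Icc a b) (fun s => B (c s)) := by
  have hγ0 : ∀ t : ℝ, 0 ≤ t → dist (γ 0) (γ t) = t := by
    intro t ht
    rw [hγ 0 t le_rfl ht, abs_of_nonpos (by linarith)]
    ring
  set G : M → ℝ → ℝ := fun x t => max t 0 - dist x (γ (max t 0)) with hGdef
  have hGmono : ∀ x, Monotone (G x) := by
    intro x t u htu
    have h1 : max t 0 ≤ max u 0 := max_le_max htu le_rfl
    have h2 : dist x (γ (max u 0)) ≤ dist x (γ (max t 0)) + (max u 0 - max t 0) := by
      have h3 := dist_triangle x (γ (max t 0)) (γ (max u 0))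
      rw [hγ _ _ (le_max_right t 0) (le_max_right u 0), abs_of_nonpos (by linarith)] at h3
      linarith
    simp only [hGdef]
    linarith
  have hGbdd : ∀ x, BddAbove (Set.range (G x)) := by
    intro x
    refine ⟨dist x (γ 0), ?_⟩
    rintro _ ⟨t, rfl⟩
    have h2 := dist_triangle (γ 0) x (γ (max t 0))
    rw [hγ0 _ (le_max_right t 0)] at h2
    have h3 : dist (γ 0) x = dist x (γ 0) := dist_comm _ _
    simp only [hGdef]
    linarith
  set B : M → ℝ := fun x => ⨆ t, G x t with hBdef
  have hBx : ∀ x : M, Tendsto (fun t => t - dist x (γ t)) atTop (nhds (B x)) := by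
    intro x
    have h := tendsto_atTop_ciSup (hGmono x) (hGbdd x)
    refine Filter.Tendsto.congr' ?_ h
    filter_upwards [eventually_ge_atTop (0:ℝ)] with t ht
    simp only [hGdef, max_eq_left ht]
  have hkey : ∀ x y : M, B x ≤ B y + dist x y := by
    intro x y
    refine le_of_tendsto_of_tendsto' (hBx x) ((hBx y).add_const (dist x y)) ?_
    intro t
    have h1 := dist_triangle y x (γ t)
    have h2 : dist y x = dist x y := dist_comm _ _
    linarith
  refine ⟨B, hBx, ?_, ?_⟩
  · refine LipschitzWith.of_dist_le_mul fun x y => ?_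
    rw [Real.dist_eq, NNReal.coe_one, one_mul]
    rw [abs_sub_le_iff]
    constructor
    · linarith [hkey x y]
    · have := hkey y x
      rw [dist_comm y x] at this
      linarith
  · intro c a b hc
    refine ⟨convex_Icc a b, ?_⟩
    intro s hs u hu wa wb hwa hwb hsum
    simp only [smul_eq_mul]
    by_cases hwa0 : wa = 0
    · subst hwa0
      have hwb1 : wb = 1 := by linarith
      subst hwb1
      simp
    by_cases hwb0 : wb = 0
    · subst hwb0
      have hwa1 : wa = 1 := by linarith
      subst hwa1
      simp
    by_cases hsu : s = u
    · subst hsu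
      have e1 : wa * s + wb * s = s := by
        have : wa * s + wb * s = (wa + wb) * s := by ring
        rw [this, hsum, one_mul]
      rw [e1]
      have e2 : wa * B (c s) + wb * B (c s) = B (c s) := by
        have : wa * B (c s) + wb * B (c s) = (wa + wb) * B (c s) := by ring
        rw [this, hsum, one_mul]
      linarith
    -- main case
    have hwa' : 0 < wa := lt_of_le_of_ne hwa (Ne.symm hwa0)
    have hwb' : 0 < wb := lt_of_le_of_ne hwb (Ne.symm hwb0)
    have hwb1 : wb < 1 := by linarith
    have hL : 0 < |s - u| := abs_pos.mpr (sub_ne_zero.mpr hsu)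
    have hm : wa * s + wb * u ∈ Set.Icc a b := (convex_Icc a b) hs hu hwa hwb hsum
    set x := c s with hx
    set y := c u with hy
    set p := c (wa * s + wb * u) with hp
    have hxy : dist x y = |s - u| := hc s hs u hu
    have hxp : dist x p = wb * |s - u| := by
      rw [hc s hs _ hm]
      have e : s - (wa * s + wb * u) = wb * (s - u) := by
        have hwa1 : wa = 1 - wb := by linarith
        rw [hwa1]; ring
      rw [e, abs_mul, abs_of_pos hwb']
    have hpy : dist p y = (1 - wb) * |s - u| := by
      rw [hc _ hm u hu]
      have e : wa * s + wb * u - u = wa * (s - u) := by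
        have hwb2 : wb = 1 - wa := by linarith
        rw [hwb2]; ring
      rw [e, abs_mul, abs_of_pos hwa']
      have : wa = 1 - wb := by linarith
      rw [this]
    have hcomp := fun q => quad_comp hcurv x p y q wb (|s - u|) hwb' hwb1 hL hxp hpy hxy
    -- replace 1 - wb by wa
    have hwa1 : (1:ℝ) - wb = wa := by linarith
    rw [hwa1] at hcomp
    set k : ℝ := wb * wa * |s - u| ^ 2 with hk
    set C : ℝ := wa * dist x (γ 0) + wb * dist y (γ 0) with hC
    have hd1 : ∀ t : ℝ, 0 ≤ t → t - dist x (γ 0) ≤ dist x (γ t) := by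
      intro t ht
      have h1 := dist_triangle (γ 0) x (γ t)
      rw [hγ0 t ht] at h1
      have h2 : dist (γ 0) x = dist x (γ 0) := dist_comm _ _
      linarith
    have hd2 : ∀ t : ℝ, 0 ≤ t → t - dist y (γ 0) ≤ dist y (γ t) := by
      intro t ht
      have h1 := dist_triangle (γ 0) y (γ t)
      rw [hγ0 t ht] at h1
      have h2 : dist (γ 0) y = dist y (γ 0) := dist_comm _ _
      linarith
    have hStend : Tendsto (fun t => wa * dist x (γ t) + wb * dist y (γ t)) atTop atTop := by
      refine tendsto_atTop_mono' atTop ?_ (tendsto_atTop_add_const_right atTop (-C) tendsto_id)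
      filter_upwards [eventually_ge_atTop (0:ℝ)] with t ht
      have h1 := mul_le_mul_of_nonneg_left (hd1 t ht) hwa
      have h2 := mul_le_mul_of_nonneg_left (hd2 t ht) hwb
      simp only [id_eq, hC]
      nlinarith
    have hinv : Tendsto (fun t => k * (wa * dist x (γ t) + wb * dist y (γ t))⁻¹) atTop
        (nhds 0) := by
      have h := hStend.inv_tendsto_atTop
      have h2 := h.const_mul k
      simpa using h2
    have hRHS : Tendsto (fun t => wa * (t - dist x (γ t)) + wb * (t - dist y (γ t))
        + k * (wa * dist x (γ t) + wb * dist y (γ t))⁻¹) atTop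
        (nhds (wa * B x + wb * B y)) := by
      have h := (((hBx x).const_mul wa).add ((hBx y).const_mul wb)).add hinv
      simpa using h
    refine le_of_tendsto_of_tendsto (hBx p) hRHS ?_
    filter_upwards [eventually_ge_atTop (max 0 (C + |s - u| + 1))] with t ht
    have ht0 : (0:ℝ) ≤ t := le_trans (le_max_left _ _) ht
    have htC : C + |s - u| + 1 ≤ t := le_trans (le_max_right _ _) ht
    have hq := hcomp (γ t)
    set d1 := dist x (γ t) with hd1'
    set d2 := dist y (γ t) with hd2'
    set r := dist p (γ t) with hr'
    set S := wa * d1 + wb * d2 with hS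
    have hSb : |s - u| + 1 ≤ S := by
      have h1 := mul_le_mul_of_nonneg_left (hd1 t ht0) hwa
      have h2 := mul_le_mul_of_nonneg_left (hd2 t ht0) hwb
      simp only [hS, hC]
      simp only [← hd1', ← hd2'] at h1 h2
      nlinarith
    have hSpos : 0 < S := by linarith
    have hSsq : S ^ 2 ≤ wa * d1 ^ 2 + wb * d2 ^ 2 := by
      nlinarith [mul_nonneg (mul_nonneg hwa hwb) (sq_nonneg (d1 - d2))]
    have hk2 : k ≤ S ^ 2 := by
      have hwale : wa ≤ 1 := by linarith
      have hwble : wb ≤ 1 := by linarith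
      have h1 : wb * wa ≤ 1 := by nlinarith
      have h2 : k ≤ |s - u| ^ 2 := by
        simp only [hk]
        nlinarith [sq_nonneg (s - u), sq_abs (s - u)]
      have h3 : (|s - u| + 1) ^ 2 ≤ S ^ 2 := by
        have := pow_le_pow_left₀ (by positivity : (0:ℝ) ≤ |s - u| + 1) hSb 2
        exact this
      nlinarith [hL]
    have hr2 : S ^ 2 ≤ r ^ 2 + k := by
      simp only [hk]
      nlinarith [hq, hSsq]
    have hkey2 : (S - r) * S ≤ k := by
      have hrn : (0:ℝ) ≤ r := dist_nonneg
      rcases le_or_gt r S with h | h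
      · nlinarith
      · have hk0 : 0 ≤ k := by
          rw [hk]; positivity
        nlinarith [mul_pos hSpos (sub_pos.mpr h)]
    have h7 : S - r ≤ k * S⁻¹ := by
      rw [← div_eq_mul_inv, le_div_iff₀ hSpos]
      exact hkey2
    have h8 : t - S = wa * (t - d1) + wb * (t - d2) := by
      have : wa * (t - d1) + wb * (t - d2) = (wa + wb) * t - S := by simp only [hS]; ring
      rw [this, hsum, one_mul]
    linarith [h7, h8]
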